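/- Let γ : X → H be weakly square-integrable with separable span. Then the integral operator L_Γ on L²(X,μ) with kernel Γ(x,t) = ⟨γ(t), γ(x)⟩ is trace class if and only if ∫_X Γ(x,x) dμ(x) < ∞. -/

import Mathlib

open MeasureTheory Filter
open scoped InnerProductSpace ENNReal NNReal Topology

-- aux 1: orthonormal family in a separable space is countable
theorem aux_countable {E : Type*} [NormedAddCommGroup E] [InnerProductSpace ℂ E]
    [TopologicalSpace.SeparableSpace E] {ι : Type*} {v : ι → E} (hv : Orthonormal ℂ v) :
    Countable ι := by
  refine Pairwise.countable_of_isOpen_disjoint (s := fun i => Metric.ball (v i) (1/2))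
    ?_ (fun i => Metric.isOpen_ball) (fun i => ⟨v i, by simp⟩)
  intro i j hij
  simp only [Function.onFun]
  rw [Set.disjoint_left]
  intro z hi hj
  have h2 : ‖v i - v j‖ ^ 2 = 2 := by
    rw [@norm_sub_sq ℂ]
    simp [hv.1, hv.2 hij]
    norm_num
  have : dist (v i) (v j) < 1 := by
    have := dist_triangle (v i) z (v j)
    rw [dist_comm (v i) z] at this
    simp only [Metric.mem_ball] at hi hj
    linarith
  rw [dist_eq_norm] at this
  nlinarith [norm_nonneg (v i - v j)]

-- aux 2: Parseval in ℝ≥0∞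
theorem aux_parseval {E : Type*} [NormedAddCommGroup E] [InnerProductSpace ℂ E]
    {ι : Type*} (b : HilbertBasis ι ℂ E) (u : E) :
    ∑' i, (‖⟪b i, u⟫_ℂ‖₊ : ℝ≥0∞) ^ 2 = (‖u‖₊ : ℝ≥0∞) ^ 2 := by
  have h := b.hasSum_inner_mul_inner u u
  have hterm : ∀ i, ⟪u, b i⟫_ℂ * ⟪b i, u⟫_ℂ = ((‖⟪b i, u⟫_ℂ‖ ^ 2 : ℝ) : ℂ) := by
    intro i
    rw [← inner_conj_symm (b i) u, RCLike.norm_conj, RCLike.mul_conj]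
    norm_cast
  have hself : ⟪u, u⟫_ℂ = ((‖u‖ ^ 2 : ℝ) : ℂ) := by
    rw [inner_self_eq_norm_sq_to_K]; norm_cast
  rw [funext hterm, hself, Complex.hasSum_ofReal] at h
  have hsum := h.tsum_eq
  have := ENNReal.ofReal_tsum_of_nonneg (fun i => sq_nonneg ‖⟪b i, u⟫_ℂ‖) h.summable
  rw [hsum] at this
  calc ∑' i, (‖⟪b i, u⟫_ℂ‖₊ : ℝ≥0∞) ^ 2
      = ∑' i, ENNReal.ofReal (‖⟪b i, u⟫_ℂ‖ ^ 2) := by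
        congr 1; funext i
        rw [← enorm_eq_nnnorm, ← ofReal_norm, ← ENNReal.ofReal_pow (norm_nonneg _)]
    _ = ENNReal.ofReal (‖u‖ ^ 2) := this.symm
    _ = (‖u‖₊ : ℝ≥0∞) ^ 2 := by
        rw [← enorm_eq_nnnorm, ← ofReal_norm, ← ENNReal.ofReal_pow (norm_nonneg _)]


theorem aux_lp_norm {X : Type*} [MeasurableSpace X] {μ : Measure X} (g : Lp ℂ 2 μ) :
    (‖g‖₊ : ℝ≥0∞) ^ 2 = ∫⁻ x, (‖(g : X → ℂ) x‖₊ : ℝ≥0∞) ^ 2 ∂μ := by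
  have hfin : ∫⁻ x, (‖(g : X → ℂ) x‖₊ : ℝ≥0∞) ^ (2:ℝ) ∂μ < ∞ := by
    have := Lp.eLpNorm_lt_top g
    rw [eLpNorm_eq_lintegral_rpow_enorm_toReal (by norm_num) (by norm_num)] at this
    simp only [ENNReal.toReal_ofNat] at this
    exact lintegral_rpow_enorm_lt_top_of_eLpNorm'_lt_top (f := (g : X → ℂ)) (μ := μ) zero_lt_two
      (by rwa [eLpNorm'] )
  have h1 := inner_self_eq_norm_sq_to_K (𝕜 := ℂ) g
  rw [L2.inner_def, L2.integral_inner_eq_sq_eLpNorm] at h1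
  have h2 : ‖g‖ ^ 2 = (∫⁻ x, (‖(g : X → ℂ) x‖₊ : ℝ≥0∞) ^ (2:ℝ) ∂μ).toReal := by
    exact_mod_cast h1.symm
  have h3 : (‖g‖₊ : ℝ≥0∞) ^ 2 = ENNReal.ofReal (‖g‖ ^ 2) := by
    rw [← enorm_eq_nnnorm, ← ofReal_norm, ← ENNReal.ofReal_pow (norm_nonneg _)]
  rw [h3, h2, ENNReal.ofReal_toReal hfin.ne]
  congr 1
  funext x
  rw [← ENNReal.rpow_natCast]
  norm_num



/-- let `γ : X → H` be weakly square-integrable with separable closed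
span and let `T = L_Γ = A_γ A_γ*` be the (positive bounded) integral operator on
`L²(X,μ)` with kernel `Γ(x,t) = ⟨γ t, γ x⟩ = ⟪γ x, γ t⟫_ℂ`.  Then `L_Γ` is trace
class if and only if `∫ Γ(x,x) dμ(x) = ∫ ‖γ x‖² dμ(x) < ∞`; for the positive
operator `L_Γ` being trace class is expressed by the finiteness of the diagonal sum
`∑ᵢ ⟨L_Γ bᵢ, bᵢ⟩` along any Hilbert basis `(b i)` of `L²(X,μ)`. -/
theorem integral_operator_traceClass_iff {X : Type*} [MeasurableSpace X]
    (μ : Measure X) [SigmaFinite μ] {H : Type*} [NormedAddCommGroup H]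
    [InnerProductSpace ℂ H] [CompleteSpace H] (γ : X → H)
    (hsep : TopologicalSpace.IsSeparable
      (((Submodule.span ℂ (Set.range γ)).topologicalClosure : Submodule ℂ H) : Set H))
    (hint : ∀ v : H, Measurable (fun x => ⟪γ x, v⟫_ℂ) ∧
      MemLp (fun x => ⟪γ x, v⟫_ℂ) 2 μ)
    (T : Lp ℂ 2 μ →L[ℂ] Lp ℂ 2 μ)
    (hT : ∀ φ : Lp ℂ 2 μ,
      (T φ : X → ℂ) =ᵐ[μ] fun x => ∫ t, ⟪γ x, γ t⟫_ℂ * (φ : X → ℂ) t ∂μ)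
    {ι : Type*} (b : HilbertBasis ι ℂ (Lp ℂ 2 μ)) :
    ∑' i : ι, (‖⟪b i, T (b i)⟫_ℂ‖₊ : ℝ≥0∞) < ⊤ ↔
      ∫⁻ x, (‖γ x‖₊ : ℝ≥0∞) ^ 2 ∂μ < ⊤ := by
  classical
  set K : Submodule ℂ H := (Submodule.span ℂ (Set.range γ)).topologicalClosure with hKdef
  have hKclosed : IsClosed (K : Set H) := Submodule.isClosed_topologicalClosure _
  haveI : CompleteSpace K := hKclosed.completeSpace_coe
  haveI : TopologicalSpace.SeparableSpace K := hsep.separableSpace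
  obtain ⟨w, e, -⟩ := exists_hilbertBasis ℂ K
  haveI : Countable w := aux_countable e.orthonormal
  have hγK : ∀ x, γ x ∈ K := fun x =>
    Submodule.le_topologicalClosure _ (Submodule.subset_span ⟨x, rfl⟩)
  have hmem : ∀ v : H, MemLp (fun x => ⟪γ x, v⟫_ℂ) 2 μ := fun v => (hint v).2
  -- the analysis operator
  let A₀ : H →ₗ[ℂ] Lp ℂ 2 μ :=
    { toFun := fun v => (hmem v).toLp _
      map_add' := by
        intro v v'
        refine MeasureTheory.Lp.ext (μ := μ) ?_
        filter_upwards [MemLp.coeFn_toLp (hmem (v + v')), MemLp.coeFn_toLp (hmem v),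
          MemLp.coeFn_toLp (hmem v'),
          MeasureTheory.Lp.coeFn_add (MemLp.toLp _ (hmem v)) (MemLp.toLp _ (hmem v'))]
          with x h1 h2 h3 h4
        rw [h1, h4, Pi.add_apply, h2, h3, inner_add_right]
      map_smul' := by
        intro c v
        refine MeasureTheory.Lp.ext (μ := μ) ?_
        filter_upwards [MemLp.coeFn_toLp (hmem (c • v)), MemLp.coeFn_toLp (hmem v),
          MeasureTheory.Lp.coeFn_smul c (MemLp.toLp _ (hmem v))] with x h1 h2 h3
        rw [RingHom.id_apply, h1, h3, Pi.smul_apply, h2, inner_smul_right, smul_eq_mul] }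
  have hA₀ : ∀ v : H, (A₀ v : X → ℂ) =ᵐ[μ] fun x => ⟪γ x, v⟫_ℂ := fun v =>
    (hmem v).coeFn_toLp
  have hAcont : Continuous A₀ := by
    apply A₀.continuous_of_seq_closed_graph
    intro u x y hu hy
    symm
    apply MeasureTheory.Lp.ext (μ := μ)
    have hmeas : TendstoInMeasure μ (fun n => ((A₀ (u n) : Lp ℂ 2 μ) : X → ℂ)) atTop
        ((y : Lp ℂ 2 μ) : X → ℂ) := tendstoInMeasure_of_tendsto_Lp hy
    obtain ⟨ns, hns, hae⟩ := hmeas.exists_seq_tendsto_ae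
    have hcoe : ∀ᵐ t ∂μ, ∀ n : ℕ, ((A₀ (u n) : Lp ℂ 2 μ) : X → ℂ) t = ⟪γ t, u n⟫_ℂ :=
      MeasureTheory.ae_all_iff.2 fun n => hA₀ (u n)
    filter_upwards [hae, hcoe, hA₀ x] with t ht hct hxt
    have h1 : Tendsto (fun k => ⟪γ t, u (ns k)⟫_ℂ) atTop (𝓝 ((y : Lp ℂ 2 μ) t)) := by
      simpa only [Function.comp, hct] using ht
    have h2 : Tendsto (fun k => ⟪γ t, u (ns k)⟫_ℂ) atTop (𝓝 (⟪γ t, x⟫_ℂ)) :=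
      Filter.Tendsto.inner tendsto_const_nhds (hu.comp hns.tendsto_atTop)
    rw [hxt]
    exact (tendsto_nhds_unique h1 h2).symm
  let A : H →L[ℂ] Lp ℂ 2 μ := ⟨A₀, hAcont⟩
  let B : Lp ℂ 2 μ →L[ℂ] H := ContinuousLinearMap.adjoint A
  have hAco : ∀ v : H, ((A v : Lp ℂ 2 μ) : X → ℂ) =ᵐ[μ] fun x => ⟪γ x, v⟫_ℂ := hA₀
  have hAzero : ∀ v ∈ Kᗮ, A v = 0 := by
    intro v hv
    apply MeasureTheory.Lp.ext (μ := μ)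
    refine (hAco v).trans ?_
    refine Filter.EventuallyEq.trans ?_ (MeasureTheory.Lp.coeFn_zero ℂ 2 μ).symm
    filter_upwards with t
    have : (γ t : H) ∈ K := hγK t
    exact Submodule.inner_right_of_mem_orthogonal this hv
  have hBK : ∀ φ : Lp ℂ 2 μ, B φ ∈ K := by
    intro φ
    rw [← Submodule.orthogonal_orthogonal K]
    rw [Submodule.mem_orthogonal]
    intro v hv
    rw [inner_eq_zero_symm]
    calc ⟪B φ, v⟫_ℂ = ⟪φ, A v⟫_ℂ := ContinuousLinearMap.adjoint_inner_left A v φ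
      _ = 0 := by rw [hAzero v hv, inner_zero_right]
  -- diagonal entries
  have hdiag : ∀ φ : Lp ℂ 2 μ, (‖⟪φ, T φ⟫_ℂ‖₊ : ℝ≥0∞) = (‖B φ‖₊ : ℝ≥0∞) ^ 2 := by
    intro φ
    have hTφ : T φ = A (B φ) := by
      apply MeasureTheory.Lp.ext (μ := μ)
      refine (hT φ).trans (Filter.EventuallyEq.trans ?_ (hAco (B φ)).symm)
      have hptwise : ∀ x : X, ⟪γ x, B φ⟫_ℂ = ∫ t, ⟪γ x, γ t⟫_ℂ * (φ : X → ℂ) t ∂μ := by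
        intro x
        rw [← inner_conj_symm (γ x) (B φ),
          ContinuousLinearMap.adjoint_inner_left A (γ x) φ, L2.inner_def, ← integral_conj]
        refine integral_congr_ae ?_
        filter_upwards [hAco (γ x)] with t ht
        simp only [RCLike.inner_apply, map_mul, RingHom.id_apply, starRingEnd_self_apply, ht]
        rw [← inner_conj_symm (γ x) (γ t)]
      filter_upwards with x
      exact (hptwise x).symm
    have hself := inner_self_eq_norm_sq_to_K (𝕜 := ℂ) (B φ)
    rw [hTφ, ← ContinuousLinearMap.adjoint_inner_left A (B φ) φ, hself]
    rw [nnnorm_pow]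
    norm_cast
    simp
  have key : ∑' i : ι, (‖⟪b i, T (b i)⟫_ℂ‖₊ : ℝ≥0∞) = ∫⁻ x, (‖γ x‖₊ : ℝ≥0∞) ^ 2 ∂μ := by
    have step1 : ∀ i : ι, (‖B (b i)‖₊ : ℝ≥0∞) ^ 2
        = ∑' j : w, (‖⟪b i, A ((e j : K) : H)⟫_ℂ‖₊ : ℝ≥0∞) ^ 2 := by
      intro i
      have hp := aux_parseval e ⟨B (b i), hBK (b i)⟩
      have hn : ‖(⟨B (b i), hBK (b i)⟩ : K)‖₊ = ‖B (b i)‖₊ := rfl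
      rw [hn] at hp
      rw [← hp]
      refine tsum_congr fun j => ?_
      congr 1
      rw [Submodule.coe_inner, ContinuousLinearMap.adjoint_inner_right A ((e j : K) : H) (b i),
        ← inner_conj_symm (A ((e j : K) : H)) (b i), RCLike.nnnorm_conj]
    have step2 : ∀ j : w, ∑' i : ι, (‖⟪b i, A ((e j : K) : H)⟫_ℂ‖₊ : ℝ≥0∞) ^ 2
        = ∫⁻ x, (‖⟪γ x, ((e j : K) : H)⟫_ℂ‖₊ : ℝ≥0∞) ^ 2 ∂μ := by
      intro j
      rw [aux_parseval b (A ((e j : K) : H)), aux_lp_norm]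
      refine lintegral_congr_ae ?_
      filter_upwards [hAco ((e j : K) : H)] with x hx
      rw [hx]
    have step3 : ∀ x : X, ∑' j : w, (‖⟪γ x, ((e j : K) : H)⟫_ℂ‖₊ : ℝ≥0∞) ^ 2
        = (‖γ x‖₊ : ℝ≥0∞) ^ 2 := by
      intro x
      have hp := aux_parseval e ⟨γ x, hγK x⟩
      have hn : ‖(⟨γ x, hγK x⟩ : K)‖₊ = ‖γ x‖₊ := rfl
      rw [hn] at hp
      rw [← hp]
      refine tsum_congr fun j => ?_
      congr 1
      rw [Submodule.coe_inner,
        ← inner_conj_symm (γ x) ((e j : K) : H), RCLike.nnnorm_conj]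
    calc ∑' i : ι, (‖⟪b i, T (b i)⟫_ℂ‖₊ : ℝ≥0∞)
        = ∑' i : ι, (‖B (b i)‖₊ : ℝ≥0∞) ^ 2 := tsum_congr fun i => hdiag (b i)
      _ = ∑' i : ι, ∑' j : w, (‖⟪b i, A ((e j : K) : H)⟫_ℂ‖₊ : ℝ≥0∞) ^ 2 :=
          tsum_congr step1
      _ = ∑' j : w, ∑' i : ι, (‖⟪b i, A ((e j : K) : H)⟫_ℂ‖₊ : ℝ≥0∞) ^ 2 :=
          ENNReal.tsum_comm
      _ = ∑' j : w, ∫⁻ x, (‖⟪γ x, ((e j : K) : H)⟫_ℂ‖₊ : ℝ≥0∞) ^ 2 ∂μ :=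
          tsum_congr step2
      _ = ∫⁻ x, ∑' j : w, (‖⟪γ x, ((e j : K) : H)⟫_ℂ‖₊ : ℝ≥0∞) ^ 2 ∂μ :=
          (lintegral_tsum fun j =>
            (((hint _).1.nnnorm.coe_nnreal_ennreal).pow_const 2).aemeasurable).symm
      _ = ∫⁻ x, (‖γ x‖₊ : ℝ≥0∞) ^ 2 ∂μ := lintegral_congr step3
  rw [key]
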